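/- Let O be a noetherian local domain and p a prime ideal such that O/p is a discrete valuation ring with uniformizer (the image of) π ∈ O. Let O' be the ring ∑_{i≥0} π^{-i} p^i inside Frac(O) (the affine blow-up algebra), and let p₁ be the ideal of O' generated by π^{-1}p. Then for each m ≥ 0 the map φ : π^{-m}(O/p) ⊗_{O/p} p^m/p^{m+1} → p₁^m/p₁^{m+1} sending π^{-m} ⊗ x to the class of π^{-m}x is a well-defined surjective O/p-linear map. -/

import Mathlib

set_option synthInstance.maxHeartbeats 800000
set_option maxHeartbeats 1600000

/-- The affine blow-up algebra `O' = ∑_{i≥0} π^{-i} p^i` inside `Frac(O)`,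
realized as the `O`-subalgebra of `Frac(O)` generated by `π^{-1}p`. -/
noncomputable def blowupAlgebra (O : Type*) [CommRing O] [IsDomain O]
    (p : Ideal O) (π : O) : Subalgebra O (FractionRing O) :=
  Algebra.adjoin O {y : FractionRing O | ∃ x ∈ p,
    y * algebraMap O (FractionRing O) π = algebraMap O (FractionRing O) x}

/-- The ideal `p₁` of `O'` generated by `π^{-1}p`. -/
noncomputable def blowupIdeal (O : Type*) [CommRing O] [IsDomain O]
    (p : Ideal O) (π : O) : Ideal (blowupAlgebra O p π) :=
  Ideal.span {a : blowupAlgebra O p π | ∃ x ∈ p,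
    (a : FractionRing O) * algebraMap O (FractionRing O) π
      = algebraMap O (FractionRing O) x}

/-- The power `p₁^m`, viewed as an `O`-submodule of `Frac(O)`. -/
noncomputable def blowupIdealPow (O : Type*) [CommRing O] [IsDomain O]
    (p : Ideal O) (π : O) (m : ℕ) : Submodule O (FractionRing O) :=
  Submodule.map ((blowupAlgebra O p π).val.toLinearMap)
    (((blowupIdeal O p π) ^ m).restrictScalars O)

namespace BlowupAux

variable {O : Type*} [CommRing O] [IsDomain O] (p : Ideal O) (π : O)

/-- The image of an ideal of `O'` as an `O`-submodule of `Frac O`. -/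
noncomputable def bIm (I : Ideal (blowupAlgebra O p π)) : Submodule O (FractionRing O) :=
  Submodule.map ((blowupAlgebra O p π).val.toLinearMap) (I.restrictScalars O)

lemma blowupIdealPow_eq (m : ℕ) :
    blowupIdealPow O p π m = bIm p π (blowupIdeal O p π ^ m) := rfl

lemma mem_bIm {I : Ideal (blowupAlgebra O p π)} {y : FractionRing O} :
    y ∈ bIm p π I ↔ ∃ a : blowupAlgebra O p π, a ∈ I ∧ (a : FractionRing O) = y := by
  constructor
  · rintro ⟨a, ha, rfl⟩
    exact ⟨a, ha, rfl⟩
  · rintro ⟨a, ha, rfl⟩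
    exact ⟨a, ha, rfl⟩

lemma bIm_mono {I J : Ideal (blowupAlgebra O p π)} (h : I ≤ J) :
    bIm p π I ≤ bIm p π J := by
  rintro y hy
  rw [mem_bIm] at hy ⊢
  obtain ⟨a, ha, rfl⟩ := hy
  exact ⟨a, h ha, rfl⟩

lemma bIm_mul {I J : Ideal (blowupAlgebra O p π)} {y z : FractionRing O}
    (hy : y ∈ bIm p π I) (hz : z ∈ bIm p π J) : y * z ∈ bIm p π (I * J) := by
  rw [mem_bIm] at hy hz ⊢
  obtain ⟨a, ha, rfl⟩ := hy
  obtain ⟨b, hb, rfl⟩ := hz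
  exact ⟨a * b, Ideal.mul_mem_mul ha hb, by push_cast; ring⟩

lemma bIm_smul {I : Ideal (blowupAlgebra O p π)} (c : blowupAlgebra O p π)
    {y : FractionRing O} (hy : y ∈ bIm p π I) :
    (c : FractionRing O) * y ∈ bIm p π I := by
  rw [mem_bIm] at hy ⊢
  obtain ⟨a, ha, rfl⟩ := hy
  exact ⟨c * a, I.mul_mem_left c ha, by push_cast; ring⟩

variable (hπ0 : algebraMap O (FractionRing O) π ≠ 0)
include hπ0

lemma gen_eq {s : FractionRing O} {x : O}
    (h : s * algebraMap O (FractionRing O) π = algebraMap O (FractionRing O) x) :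
    s = (algebraMap O (FractionRing O) π)⁻¹ * algebraMap O (FractionRing O) x := by
  rw [← h, mul_comm s, ← mul_assoc, inv_mul_cancel₀ hπ0, one_mul]

lemma gen_mem {x : O} (hx : x ∈ p) :
    ∃ g : blowupAlgebra O p π, g ∈ blowupIdeal O p π ∧
      (g : FractionRing O)
        = (algebraMap O (FractionRing O) π)⁻¹ * algebraMap O (FractionRing O) x := by
  have hcond : ((algebraMap O (FractionRing O) π)⁻¹ * algebraMap O (FractionRing O) x)
      * algebraMap O (FractionRing O) π = algebraMap O (FractionRing O) x := by
    rw [mul_comm, ← mul_assoc, mul_inv_cancel₀ hπ0, one_mul]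
  refine ⟨⟨_, Algebra.subset_adjoin ⟨x, hx, hcond⟩⟩, ?_, rfl⟩
  exact Ideal.subset_span ⟨x, hx, hcond⟩

lemma gen_bIm {x : O} (hx : x ∈ p) :
    (algebraMap O (FractionRing O) π)⁻¹ * algebraMap O (FractionRing O) x
      ∈ bIm p π (blowupIdeal O p π) := by
  obtain ⟨g, hg, hgeq⟩ := gen_mem p π hπ0 hx
  exact (mem_bIm p π).mpr ⟨g, hg, hgeq⟩

/-- Every element of `O'` is (the image of) an element of `O` plus an element of `p₁`. -/
lemma exists_decomp (r : blowupAlgebra O p π) :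
    ∃ c : O, ∃ u ∈ bIm p π (blowupIdeal O p π),
      (r : FractionRing O) = algebraMap O (FractionRing O) c + u := by
  obtain ⟨y, hy⟩ := r
  show ∃ c : O, ∃ u ∈ bIm p π (blowupIdeal O p π),
      y = algebraMap O (FractionRing O) c + u
  induction hy using Algebra.adjoin_induction with
  | mem s hs =>
    obtain ⟨x, hx, hxeq⟩ := hs
    refine ⟨0, s, ?_, by simp⟩
    rw [gen_eq π hπ0 hxeq]
    exact gen_bIm p π hπ0 hx
  | algebraMap c => exact ⟨c, 0, zero_mem _, by simp⟩
  | add x y hx hy ihx ihy =>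
    obtain ⟨c, u, hu, hcu⟩ := ihx
    obtain ⟨d, v, hv, hdv⟩ := ihy
    exact ⟨c + d, u + v, add_mem hu hv, by rw [hcu, hdv, map_add]; ring⟩
  | mul x y hx hy ihx ihy =>
    obtain ⟨c, u, hu, hcu⟩ := ihx
    obtain ⟨d, v, hv, hdv⟩ := ihy
    refine ⟨c * d, algebraMap O (FractionRing O) c * v
        + algebraMap O (FractionRing O) d * u + u * v, ?_, ?_⟩
    · refine add_mem (add_mem ?_ ?_) ?_
      · have := bIm_smul p π (algebraMap O (blowupAlgebra O p π) c) hv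
        simpa using this
      · have := bIm_smul p π (algebraMap O (blowupAlgebra O p π) d) hu
        simpa using this
      · exact bIm_mono p π Ideal.mul_le_left (bIm_mul p π hu hv)
    · rw [hcu, hdv, map_mul]; ring

/-- Every element of `p₁` is `π⁻¹ x` for some `x ∈ p`, modulo `p₁²`. -/
lemma exists_decomp_ideal {s : blowupAlgebra O p π} (hs : s ∈ blowupIdeal O p π) :
    ∃ x ∈ p, ∃ w ∈ bIm p π (blowupIdeal O p π ^ 2),
      (s : FractionRing O)
        = (algebraMap O (FractionRing O) π)⁻¹ * algebraMap O (FractionRing O) x + w := by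
  induction hs using Submodule.span_induction with
  | mem g hg =>
    obtain ⟨x, hx, hxeq⟩ := hg
    exact ⟨x, hx, 0, zero_mem _, by rw [gen_eq π hπ0 hxeq, add_zero]⟩
  | zero => exact ⟨0, p.zero_mem, 0, zero_mem _, by simp⟩
  | add x y hx hy ihx ihy =>
    obtain ⟨a, ha, w, hw, hweq⟩ := ihx
    obtain ⟨b, hb, v, hv, hveq⟩ := ihy
    refine ⟨a + b, p.add_mem ha hb, w + v, add_mem hw hv, ?_⟩
    push_cast
    rw [hweq, hveq]; ring
  | smul a x hx ih =>
    obtain ⟨b, hb, w, hw, hweq⟩ := ih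
    obtain ⟨c, u, hu, hcu⟩ := exists_decomp p π hπ0 a
    refine ⟨c * b, p.mul_mem_left c hb,
      algebraMap O (FractionRing O) c * w
        + u * ((algebraMap O (FractionRing O) π)⁻¹ * algebraMap O (FractionRing O) b)
        + u * w, ?_, ?_⟩
    · refine add_mem (add_mem ?_ ?_) ?_
      · have := bIm_smul p π (algebraMap O (blowupAlgebra O p π) c) hw
        simpa using this
      · have := bIm_mul p π hu (gen_bIm p π hπ0 hb)
        rwa [← pow_two] at this
      · have := bIm_mul p π hu hw
        refine bIm_mono p π ?_ this
        rw [← pow_succ']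
        exact Ideal.pow_le_pow_right (by norm_num)
    · have hax : ((a • x : blowupAlgebra O p π) : FractionRing O)
          = (a : FractionRing O) * (x : FractionRing O) := by
        push_cast [smul_eq_mul]; ring
      rw [hax, hcu, hweq, map_mul]; ring

/-- Part 1: `π^{-m} x ∈ p₁^m` for `x ∈ p^m`. -/
lemma part1 : ∀ m : ℕ, ∀ x ∈ p ^ m,
    (algebraMap O (FractionRing O) π)⁻¹ ^ m * algebraMap O (FractionRing O) x
      ∈ bIm p π (blowupIdeal O p π ^ m) := by
  intro m
  induction m with
  | zero =>
    intro x _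
    rw [pow_zero, pow_zero, one_mul]
    refine (mem_bIm p π).mpr ⟨algebraMap O (blowupAlgebra O p π) x, ?_, rfl⟩
    rw [Ideal.one_eq_top]; trivial
  | succ m ih =>
    intro x hx
    rw [pow_succ] at hx
    refine Submodule.mul_induction_on hx ?_ ?_
    · intro a ha b hb
      have key : (algebraMap O (FractionRing O) π)⁻¹ ^ (m + 1)
            * algebraMap O (FractionRing O) (a * b)
          = ((algebraMap O (FractionRing O) π)⁻¹ ^ m * algebraMap O (FractionRing O) a)
            * ((algebraMap O (FractionRing O) π)⁻¹ * algebraMap O (FractionRing O) b) := by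
        rw [map_mul, pow_succ]; ring
      rw [key, pow_succ]
      exact bIm_mul p π (ih a ha) (gen_bIm p π hπ0 hb)
    · intro y z hy hz
      rw [map_add, mul_add]
      exact add_mem hy hz

/-- Key structural lemma for surjectivity. -/
lemma key3 : ∀ (n : ℕ) (b : blowupAlgebra O p π), b ∈ blowupIdeal O p π ^ n →
    ∃ x ∈ p ^ n, ∃ w ∈ bIm p π (blowupIdeal O p π ^ (n + 1)),
      (b : FractionRing O)
        = (algebraMap O (FractionRing O) π)⁻¹ ^ n * algebraMap O (FractionRing O) x + w := by
  intro n b hb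
  refine Submodule.pow_induction_on_left' (M := (blowupIdeal O p π : Ideal (blowupAlgebra O p π)))
    (C := fun n b _ => ∃ x ∈ p ^ n, ∃ w ∈ bIm p π (blowupIdeal O p π ^ (n + 1)),
      (b : FractionRing O)
        = (algebraMap O (FractionRing O) π)⁻¹ ^ n * algebraMap O (FractionRing O) x + w)
    ?_ ?_ ?_ hb
  · intro r
    obtain ⟨c, u, hu, hcu⟩ := exists_decomp p π hπ0 r
    refine ⟨c, by rw [pow_zero, Ideal.one_eq_top]; trivial, u, by rwa [zero_add, pow_one], ?_⟩
    simpa [Algebra.algebraMap_self_apply] using hcu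
  · intro x y i hx hy ihx ihy
    obtain ⟨a, ha, w, hw, hweq⟩ := ihx
    obtain ⟨b', hb', v, hv, hveq⟩ := ihy
    refine ⟨a + b', Ideal.add_mem _ ha hb', w + v, add_mem hw hv, ?_⟩
    push_cast
    rw [hweq, hveq]; ring
  · intro s hs i x hx ih
    obtain ⟨a, ha, w, hw, hweq⟩ := ih
    obtain ⟨b', hb', v, hv, hveq⟩ := exists_decomp_ideal p π hπ0 hs
    refine ⟨a * b', by rw [pow_succ]; exact Ideal.mul_mem_mul ha hb',
      ((algebraMap O (FractionRing O) π)⁻¹ * algebraMap O (FractionRing O) b') * w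
        + v * ((algebraMap O (FractionRing O) π)⁻¹ ^ i * algebraMap O (FractionRing O) a)
        + v * w, ?_, ?_⟩
    · refine add_mem (add_mem ?_ ?_) ?_
      · rw [pow_succ']
        exact bIm_mul p π (gen_bIm p π hπ0 hb') hw
      · have h1 := bIm_mul p π hv (part1 p π hπ0 i a ha)
        have h2 : blowupIdeal O p π ^ 2 * blowupIdeal O p π ^ i
            = blowupIdeal O p π ^ (i + 1 + 1) := by
          rw [← pow_add]; ring_nf
        rwa [h2] at h1
      · have h1 := bIm_mul p π hv hw
        refine bIm_mono p π ?_ h1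
        rw [← pow_add]
        exact Ideal.pow_le_pow_right (by omega)
    · have hsx : ((s * x : blowupAlgebra O p π) : FractionRing O)
          = (s : FractionRing O) * (x : FractionRing O) := by push_cast; ring
      rw [hsx, hveq, hweq, map_mul, pow_succ]
      ring

end BlowupAux

theorem blowup_phi_welldefined_surjective
    (O : Type*) [CommRing O] [IsDomain O] [IsNoetherianRing O] [IsLocalRing O]
    (p : Ideal O) [p.IsPrime] [IsDiscreteValuationRing (O ⧸ p)]
    (π : O) (hπ : Irreducible (Ideal.Quotient.mk p π)) (m : ℕ) :
    (∀ x ∈ p ^ m,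
      (algebraMap O (FractionRing O) π)⁻¹ ^ m * algebraMap O (FractionRing O) x
        ∈ blowupIdealPow O p π m) ∧
    (∀ x ∈ p ^ (m + 1),
      (algebraMap O (FractionRing O) π)⁻¹ ^ m * algebraMap O (FractionRing O) x
        ∈ blowupIdealPow O p π (m + 1)) ∧
    (∀ y ∈ blowupIdealPow O p π m, ∃ x ∈ p ^ m,
      (algebraMap O (FractionRing O) π)⁻¹ ^ m * algebraMap O (FractionRing O) x - y
        ∈ blowupIdealPow O p π (m + 1)) := by
  have hπp : π ∉ p := by
    intro h
    exact hπ.ne_zero ((Ideal.Quotient.eq_zero_iff_mem).mpr h)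
  have hπne : π ≠ 0 := fun h => hπp (h ▸ p.zero_mem)
  have hπ0 : algebraMap O (FractionRing O) π ≠ 0 := by
    simpa using (map_ne_zero_iff _ (IsFractionRing.injective O (FractionRing O))).mpr hπne
  rw [BlowupAux.blowupIdealPow_eq, BlowupAux.blowupIdealPow_eq]
  refine ⟨BlowupAux.part1 p π hπ0 m, ?_, ?_⟩
  · intro x hx
    have h1 := BlowupAux.part1 p π hπ0 (m + 1) x hx
    have key : (algebraMap O (FractionRing O) π)⁻¹ ^ m * algebraMap O (FractionRing O) x
        = algebraMap O (FractionRing O) π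
          * ((algebraMap O (FractionRing O) π)⁻¹ ^ (m + 1) * algebraMap O (FractionRing O) x) := by
      rw [pow_succ, ← mul_assoc, mul_comm (algebraMap O (FractionRing O) π),
        mul_assoc _ _ (algebraMap O (FractionRing O) π), inv_mul_cancel₀ hπ0, mul_one]
    rw [key]
    have := BlowupAux.bIm_smul p π (algebraMap O (blowupAlgebra O p π) π) h1
    simpa using this
  · intro y hy
    obtain ⟨b, hb, rfl⟩ := (BlowupAux.mem_bIm p π).mp hy
    obtain ⟨x, hx, w, hw, hweq⟩ := BlowupAux.key3 p π hπ0 m b hb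
    refine ⟨x, hx, ?_⟩
    have : (algebraMap O (FractionRing O) π)⁻¹ ^ m * algebraMap O (FractionRing O) x
        - (b : FractionRing O) = -w := by rw [hweq]; ring
    rw [this]
    exact neg_mem hw
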